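/- Let X be a d-partite simplicial complex with parts V_1,…,V_d such that for every pair of distinct colors i ≠ j, the bipartite graph G_{i,j} between V_i and V_j has second singular value at most λ. Then the second largest singular value of the normalized adjacency operator of the full graph (X(1), X(2)) is at most 1/(d−1) + λ. -/

import Mathlib

open Finset

/-- **second singular value of a `d`-partite graph.**
Let `X` be a `d`-partite simplicial complex with parts `V_1, …, V_d`, modeled by
the symmetric edge measure `w` of its underlying graph `(X(1), X(2))`, with
vertex measure `μ v = ∑ u, w v u`.  The edge measure is a uniform mixture over
ordered pairs of distinct colours of the bipartite graphs `G_{i,j}` (`hpair`),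
each part has measure `1/d` (`hparts`), the marginal of `G_{i,j}` on `V_i` is
`μ` conditioned on `V_i` (`hmarg`), and each `G_{i,j}` has second singular value
at most `lam` (`hsv`, stated functionally after clearing normalizations:
the edge distribution of `G_{i,j}` is `d(d−1)·w` on `V_i × V_j`, and the vertex
distribution on a part is `d·μ`).  Then the normalized adjacency operator of the
full graph has second largest singular value at most `1/(d−1) + lam`:
for every mean-zero function `f` of unit norm, `|⟨f, M f⟩| ≤ 1/(d−1) + lam`. -/
theorem partite_graph_second_singular_value
    {V : Type*} [Fintype V] (d : ℕ) (hd : 2 ≤ d)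
    (col : V → Fin d) (w : V → V → ℝ) (μ : V → ℝ) (lam : ℝ)
    (hw0 : ∀ u v, 0 ≤ w u v) (hsymm : ∀ u v, w u v = w v u)
    (hpartite : ∀ u v, col u = col v → w u v = 0)
    (hμ : ∀ v, μ v = ∑ u, w v u)
    (hsum : ∑ v, μ v = 1)
    (hlam : 0 ≤ lam)
    (hparts : ∀ i : Fin d, ∑ v ∈ Finset.univ.filter (fun v => col v = i), μ v = 1 / d)
    (hpair : ∀ i j : Fin d, i ≠ j →
      ∑ u ∈ Finset.univ.filter (fun u => col u = i),
        ∑ v ∈ Finset.univ.filter (fun v => col v = j), w u v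
        = 1 / ((d : ℝ) * ((d : ℝ) - 1)))
    (hmarg : ∀ i j : Fin d, i ≠ j → ∀ u, col u = i →
      ∑ v ∈ Finset.univ.filter (fun v => col v = j), w u v = μ u / ((d : ℝ) - 1))
    (hsv : ∀ i j : Fin d, i ≠ j → ∀ f g : V → ℝ,
      (∑ u ∈ Finset.univ.filter (fun u => col u = i), μ u * f u = 0) →
      (∑ v ∈ Finset.univ.filter (fun v => col v = j), μ v * g v = 0) →
      |∑ u ∈ Finset.univ.filter (fun u => col u = i),
          ∑ v ∈ Finset.univ.filter (fun v => col v = j),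
            ((d : ℝ) * ((d : ℝ) - 1)) * w u v * f u * g v| ≤
        lam * Real.sqrt ((d : ℝ) *
            ∑ u ∈ Finset.univ.filter (fun u => col u = i), μ u * (f u) ^ 2) *
          Real.sqrt ((d : ℝ) *
            ∑ v ∈ Finset.univ.filter (fun v => col v = j), μ v * (g v) ^ 2)) :
    ∀ f : V → ℝ, (∑ v, μ v * f v = 0) → (∑ v, μ v * (f v) ^ 2 = 1) →
      |∑ u, ∑ v, w u v * f u * f v| ≤ 1 / ((d : ℝ) - 1) + lam := by
  intro f hmean hnorm
  classical
  set S : Fin d → Finset V := fun i => Finset.univ.filter (fun v => col v = i) with hS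
  have hd2 : (2:ℝ) ≤ (d:ℝ) := by exact_mod_cast hd
  have hd1pos : (0:ℝ) < (d:ℝ) - 1 := by linarith
  have hdpos : (0:ℝ) < (d:ℝ) := by linarith
  have fib : ∀ h : V → ℝ, ∑ i : Fin d, ∑ v ∈ S i, h v = ∑ v, h v := fun h =>
    Finset.sum_fiberwise_of_maps_to (fun x _ => Finset.mem_univ (col x)) h
  have memS : ∀ i v, v ∈ S i ↔ col v = i := by
    intro i v; simp [hS]
  have hμ0 : ∀ v, 0 ≤ μ v := fun v => by
    rw [hμ]; exact Finset.sum_nonneg fun u _ => hw0 v u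
  set a : Fin d → ℝ := fun i => (d:ℝ) * ∑ v ∈ S i, μ v * f v with ha
  set g : V → ℝ := fun v => f v - a (col v) with hg
  have hf : ∀ v, f v = a (col v) + g v := fun v => by simp [hg]
  have hasum : ∑ i, a i = 0 := by
    have : ∑ i, a i = (d:ℝ) * ∑ i, ∑ v ∈ S i, μ v * f v := by
      rw [Finset.mul_sum]
    rw [this, fib, hmean, mul_zero]
  have hπ : ∀ i, ∑ v ∈ S i, μ v * f v = a i / (d:ℝ) := by
    intro i; rw [ha]; field_simp
  have hgmean : ∀ i, ∑ v ∈ S i, μ v * g v = 0 := by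
    intro i
    have h1 : ∑ v ∈ S i, μ v * g v
        = (∑ v ∈ S i, μ v * f v) - a i * ∑ v ∈ S i, μ v := by
      rw [Finset.mul_sum, ← Finset.sum_sub_distrib]
      refine Finset.sum_congr rfl fun v hv => ?_
      simp only [hg]; rw [(memS i v).1 hv]; ring
    rw [h1, hπ, hparts i]
    field_simp
    ring
  -- T2 = 0
  have hinner : ∀ v, ∑ u, w u v * a (col u) = -(a (col v)) * (μ v / ((d:ℝ)-1)) := by
    intro v
    rw [← fib (fun u => w u v * a (col u))]
    have hterm : ∀ i : Fin d, ∑ u ∈ S i, w u v * a (col u)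
        = a i * (μ v / ((d:ℝ)-1)) - (if i = col v then a i * (μ v / ((d:ℝ)-1)) else 0) := by
      intro i
      have hrw : ∑ u ∈ S i, w u v * a (col u) = a i * ∑ u ∈ S i, w v u := by
        rw [Finset.mul_sum]
        refine Finset.sum_congr rfl fun u hu => ?_
        rw [(memS i u).1 hu, hsymm]; ring
      by_cases h : i = col v
      · have hz : ∑ u ∈ S i, w v u = 0 :=
          Finset.sum_eq_zero fun u hu => by
            rw [hsymm]; exact hpartite u v (by rw [(memS _ _).1 hu, h])
        rw [hrw, hz]; simp [h]
      · have := hmarg (col v) i (fun hh => h hh.symm) v rfl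
        rw [hrw, this]; simp [h]
    rw [Finset.sum_congr rfl (fun i _ => hterm i), Finset.sum_sub_distrib,
      ← Finset.sum_mul, hasum, Finset.sum_ite_eq' Finset.univ (col v)
        (fun i => a i * (μ v / ((d:ℝ)-1)))]
    simp
  have hT2 : ∑ u, ∑ v, w u v * a (col u) * g v = 0 := by
    rw [Finset.sum_comm]
    have h1 : ∀ v, ∑ u, w u v * a (col u) * g v
        = -(1/((d:ℝ)-1)) * (a (col v) * (μ v * g v)) := by
      intro v
      rw [← Finset.sum_mul, hinner v]; ring
    rw [Finset.sum_congr rfl (fun v _ => h1 v), ← Finset.mul_sum,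
      ← fib (fun v => a (col v) * (μ v * g v))]
    have h2 : ∀ i : Fin d, ∑ v ∈ S i, a (col v) * (μ v * g v) = 0 := by
      intro i
      have : ∑ v ∈ S i, a (col v) * (μ v * g v) = a i * ∑ v ∈ S i, μ v * g v := by
        rw [Finset.mul_sum]
        exact Finset.sum_congr rfl fun v hv => by rw [(memS i v).1 hv]
      rw [this, hgmean, mul_zero]
    rw [Finset.sum_congr rfl (fun i _ => h2 i)]
    simp
  have hT3 : ∑ u, ∑ v, w u v * g u * a (col v) = 0 := by
    rw [← hT2, Finset.sum_comm]
    exact Finset.sum_congr rfl fun u _ => Finset.sum_congr rfl fun v _ => by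
      rw [hsymm]; ring
  -- decompose double sums fiberwise
  have fib2 : ∀ h : V → V → ℝ,
      ∑ u, ∑ v, h u v = ∑ i, ∑ j, ∑ u ∈ S i, ∑ v ∈ S j, h u v := by
    intro h
    rw [← fib (fun u => ∑ v, h u v)]
    refine Finset.sum_congr rfl fun i _ => ?_
    calc ∑ u ∈ S i, ∑ v, h u v
        = ∑ u ∈ S i, ∑ j, ∑ v ∈ S j, h u v :=
          Finset.sum_congr rfl fun u _ => (fib (fun v => h u v)).symm
      _ = ∑ j, ∑ u ∈ S i, ∑ v ∈ S j, h u v := Finset.sum_comm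
  set Q : ℝ := (∑ i, (a i)^2) / (d:ℝ) with hQ
  -- T1
  have hT1 : ∑ u, ∑ v, w u v * a (col u) * a (col v) = -Q / ((d:ℝ)-1) := by
    rw [fib2]
    have key : ∀ i j : Fin d, ∑ u ∈ S i, ∑ v ∈ S j, w u v * a (col u) * a (col v)
        = a i * a j / ((d:ℝ)*((d:ℝ)-1))
          - (if j = i then a i * a j / ((d:ℝ)*((d:ℝ)-1)) else 0) := by
      intro i j
      have hrw : ∑ u ∈ S i, ∑ v ∈ S j, w u v * a (col u) * a (col v)
          = a i * a j * ∑ u ∈ S i, ∑ v ∈ S j, w u v := by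
        rw [Finset.mul_sum]
        refine Finset.sum_congr rfl fun u hu => ?_
        rw [Finset.mul_sum]
        refine Finset.sum_congr rfl fun v hv => ?_
        rw [(memS i u).1 hu, (memS j v).1 hv]; ring
      by_cases h : j = i
      · subst h
        have hz : ∑ u ∈ S j, ∑ v ∈ S j, w u v = 0 :=
          Finset.sum_eq_zero fun u hu => Finset.sum_eq_zero fun v hv =>
            hpartite u v (by rw [(memS j u).1 hu, (memS j v).1 hv])
        rw [hrw, hz]; simp
      · rw [hrw, hpair i j (fun hh => h hh.symm), if_neg h, sub_zero]; ring
    have : ∀ i : Fin d, ∑ j, (∑ u ∈ S i, ∑ v ∈ S j, w u v * a (col u) * a (col v))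
        = (∑ j, a i * a j / ((d:ℝ)*((d:ℝ)-1))) - a i * a i / ((d:ℝ)*((d:ℝ)-1)) := by
      intro i
      rw [Finset.sum_congr rfl (fun j _ => key i j), Finset.sum_sub_distrib,
        Finset.sum_ite_eq' Finset.univ i (fun j => a i * a j / ((d:ℝ)*((d:ℝ)-1)))]
      simp
    rw [Finset.sum_congr rfl (fun i _ => this i), Finset.sum_sub_distrib]
    have h1 : ∑ i, ∑ j, a i * a j / ((d:ℝ)*((d:ℝ)-1)) = 0 := by
      have : ∀ i : Fin d, ∑ j, a i * a j / ((d:ℝ)*((d:ℝ)-1))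
          = a i * ((∑ j, a j) / ((d:ℝ)*((d:ℝ)-1))) := by
        intro i; rw [← mul_div_assoc, Finset.mul_sum, Finset.sum_div]
      rw [Finset.sum_congr rfl (fun i _ => this i), ← Finset.sum_mul, hasum]; ring
    rw [h1]
    have h2 : ∑ i, a i * a i / ((d:ℝ)*((d:ℝ)-1)) = (∑ i, (a i)^2) / ((d:ℝ)*((d:ℝ)-1)) := by
      rw [Finset.sum_div]
      exact Finset.sum_congr rfl fun i _ => by ring
    rw [h2, hQ]
    field_simp
    ring
  -- energy of g
  set P : Fin d → ℝ := fun i => ∑ v ∈ S i, μ v * (g v)^2 with hP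
  have hPnn : ∀ i, 0 ≤ P i := fun i =>
    Finset.sum_nonneg fun v _ => mul_nonneg (hμ0 v) (sq_nonneg _)
  have hPsum : ∑ i, P i = 1 - Q := by
    have h1 : ∑ i, P i = ∑ v, μ v * (g v)^2 := fib _
    have h2 : ∀ v, μ v * (g v)^2
        = μ v * (f v)^2 - 2 * (μ v * f v * a (col v)) + μ v * (a (col v))^2 := by
      intro v; simp only [hg]; ring
    have h3 : ∑ v, μ v * f v * a (col v) = Q := by
      rw [← fib (fun v => μ v * f v * a (col v))]
      have : ∀ i : Fin d, ∑ v ∈ S i, μ v * f v * a (col v) = (a i)^2 / (d:ℝ) := by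
        intro i
        have : ∑ v ∈ S i, μ v * f v * a (col v) = (∑ v ∈ S i, μ v * f v) * a i := by
          rw [Finset.sum_mul]
          exact Finset.sum_congr rfl fun v hv => by rw [(memS i v).1 hv]
        rw [this, hπ]; ring
      rw [Finset.sum_congr rfl (fun i _ => this i), ← Finset.sum_div, hQ]
    have h4 : ∑ v, μ v * (a (col v))^2 = Q := by
      rw [← fib (fun v => μ v * (a (col v))^2)]
      have : ∀ i : Fin d, ∑ v ∈ S i, μ v * (a (col v))^2 = (a i)^2 / (d:ℝ) := by
        intro i
        have : ∑ v ∈ S i, μ v * (a (col v))^2 = (∑ v ∈ S i, μ v) * (a i)^2 := by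
          rw [Finset.sum_mul]
          exact Finset.sum_congr rfl fun v hv => by rw [(memS i v).1 hv]
        rw [this, hparts i]; ring
      rw [Finset.sum_congr rfl (fun i _ => this i), ← Finset.sum_div, hQ]
    calc ∑ i, P i = ∑ v, μ v * (g v)^2 := h1
      _ = (∑ v, μ v * (f v)^2) - 2 * (∑ v, μ v * f v * a (col v))
            + ∑ v, μ v * (a (col v))^2 := by
          rw [Finset.sum_congr rfl (fun v _ => h2 v), Finset.sum_add_distrib,
            Finset.sum_sub_distrib, Finset.mul_sum]
      _ = 1 - Q := by rw [hnorm, h3, h4]; ring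
  have hQnn : 0 ≤ Q := by
    rw [hQ]
    exact div_nonneg (Finset.sum_nonneg fun i _ => sq_nonneg _) (le_of_lt hdpos)
  have hQle : Q ≤ 1 := by
    have : 0 ≤ ∑ i, P i := Finset.sum_nonneg fun i _ => hPnn i
    linarith [hPsum ▸ this]
  -- T4 bound
  have hT4 : |∑ u, ∑ v, w u v * g u * g v| ≤ lam * (1 - Q) := by
    rw [fib2]
    have keybound : ∀ i j : Fin d, |∑ u ∈ S i, ∑ v ∈ S j, w u v * g u * g v|
        ≤ if j = i then 0 else lam / ((d:ℝ)-1) * (Real.sqrt (P i) * Real.sqrt (P j)) := by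
      intro i j
      by_cases h : j = i
      · subst h
        have hz : ∑ u ∈ S j, ∑ v ∈ S j, w u v * g u * g v = 0 :=
          Finset.sum_eq_zero fun u hu => Finset.sum_eq_zero fun v hv => by
            rw [hpartite u v (by rw [(memS j u).1 hu, (memS j v).1 hv])]; ring
        simp [hz]
      · have hne : i ≠ j := fun hh => h hh.symm
        have hb := hsv i j hne g g (hgmean i) (hgmean j)
        have hfac : ∑ u ∈ S i, ∑ v ∈ S j, ((d:ℝ)*((d:ℝ)-1)) * w u v * g u * g v
            = ((d:ℝ)*((d:ℝ)-1)) * ∑ u ∈ S i, ∑ v ∈ S j, w u v * g u * g v := by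
          rw [Finset.mul_sum]
          refine Finset.sum_congr rfl fun u _ => ?_
          rw [Finset.mul_sum]
          exact Finset.sum_congr rfl fun v _ => by ring
        rw [hfac, abs_mul, abs_of_pos (by positivity : (0:ℝ) < (d:ℝ)*((d:ℝ)-1))] at hb
        have hsq : ∀ k : Fin d, Real.sqrt ((d:ℝ) * P k)
            = Real.sqrt (d:ℝ) * Real.sqrt (P k) := fun k =>
          Real.sqrt_mul (le_of_lt hdpos) _
        rw [hP] at hsq
        rw [hsq i, hsq j] at hb
        have hdd : Real.sqrt (d:ℝ) * Real.sqrt (d:ℝ) = (d:ℝ) :=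
          Real.mul_self_sqrt (le_of_lt hdpos)
        have hfinal : ((d:ℝ)*((d:ℝ)-1)) * |∑ u ∈ S i, ∑ v ∈ S j, w u v * g u * g v|
            ≤ lam * ((d:ℝ) * (Real.sqrt (P i) * Real.sqrt (P j))) := by
          calc ((d:ℝ)*((d:ℝ)-1)) * |∑ u ∈ S i, ∑ v ∈ S j, w u v * g u * g v|
              ≤ lam * (Real.sqrt (d:ℝ) * Real.sqrt (P i))
                  * (Real.sqrt (d:ℝ) * Real.sqrt (P j)) := hb
            _ = lam * ((Real.sqrt (d:ℝ) * Real.sqrt (d:ℝ))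
                  * (Real.sqrt (P i) * Real.sqrt (P j))) := by ring
            _ = lam * ((d:ℝ) * (Real.sqrt (P i) * Real.sqrt (P j))) := by rw [hdd]
        simp only [if_neg h]
        rw [div_mul_eq_mul_div, le_div_iff₀ hd1pos]
        calc |∑ u ∈ S i, ∑ v ∈ S j, w u v * g u * g v| * ((d:ℝ)-1)
            = (((d:ℝ)*((d:ℝ)-1)) * |∑ u ∈ S i, ∑ v ∈ S j, w u v * g u * g v|) / (d:ℝ) := by
              field_simp
          _ ≤ (lam * ((d:ℝ) * (Real.sqrt (P i) * Real.sqrt (P j)))) / (d:ℝ) := by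
              gcongr
          _ = lam * (Real.sqrt (P i) * Real.sqrt (P j)) := by field_simp
    set s : Fin d → ℝ := fun i => Real.sqrt (P i) with hs
    have habs : |∑ i, ∑ j, ∑ u ∈ S i, ∑ v ∈ S j, w u v * g u * g v|
        ≤ ∑ i, ∑ j, (if j = i then 0 else lam / ((d:ℝ)-1) * (s i * s j)) := by
      calc |∑ i, ∑ j, ∑ u ∈ S i, ∑ v ∈ S j, w u v * g u * g v|
          ≤ ∑ i, |∑ j, ∑ u ∈ S i, ∑ v ∈ S j, w u v * g u * g v| :=
            Finset.abs_sum_le_sum_abs _ _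
        _ ≤ ∑ i, ∑ j, |∑ u ∈ S i, ∑ v ∈ S j, w u v * g u * g v| :=
            Finset.sum_le_sum fun i _ => Finset.abs_sum_le_sum_abs _ _
        _ ≤ ∑ i, ∑ j, (if j = i then 0 else lam / ((d:ℝ)-1) * (s i * s j)) :=
            Finset.sum_le_sum fun i _ => Finset.sum_le_sum fun j _ => keybound i j
    have hssq : ∀ i, s i ^ 2 = P i := fun i => Real.sq_sqrt (hPnn i)
    have hsnn : ∀ i, 0 ≤ s i := fun i => Real.sqrt_nonneg _
    have hexp : ∑ i, ∑ j, (if j = i then 0 else lam / ((d:ℝ)-1) * (s i * s j))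
        = lam / ((d:ℝ)-1) * ((∑ i, s i)^2 - ∑ i, P i) := by
      have h1 : ∀ i : Fin d, ∑ j, (if j = i then 0 else lam / ((d:ℝ)-1) * (s i * s j))
          = (∑ j, lam / ((d:ℝ)-1) * (s i * s j)) - lam / ((d:ℝ)-1) * (s i * s i) := by
        intro i
        have : ∀ j : Fin d, (if j = i then 0 else lam / ((d:ℝ)-1) * (s i * s j))
            = lam / ((d:ℝ)-1) * (s i * s j)
              - (if j = i then lam / ((d:ℝ)-1) * (s i * s j) else 0) := by
          intro j; by_cases h : j = i <;> simp [h]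
        rw [Finset.sum_congr rfl (fun j _ => this j), Finset.sum_sub_distrib,
          Finset.sum_ite_eq' Finset.univ i (fun j => lam / ((d:ℝ)-1) * (s i * s j))]
        simp
      rw [Finset.sum_congr rfl (fun i _ => h1 i), Finset.sum_sub_distrib]
      have h2 : ∑ i, ∑ j, lam / ((d:ℝ)-1) * (s i * s j)
          = lam / ((d:ℝ)-1) * ((∑ i, s i) * (∑ j, s j)) := by
        rw [Finset.sum_mul_sum, Finset.mul_sum]
        refine Finset.sum_congr rfl fun i _ => ?_
        rw [Finset.mul_sum]
      have h3 : ∑ i, lam / ((d:ℝ)-1) * (s i * s i)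
          = lam / ((d:ℝ)-1) * (∑ i, P i) := by
        rw [Finset.mul_sum]
        refine Finset.sum_congr rfl fun i _ => ?_
        rw [← hssq i]; ring
      rw [h2, h3]; ring
    have hcs : (∑ i, s i)^2 ≤ (d:ℝ) * ∑ i, P i := by
      have := sq_sum_le_card_mul_sum_sq (s := (Finset.univ : Finset (Fin d))) (f := s)
      simp only [Finset.card_univ, Fintype.card_fin] at this
      calc (∑ i, s i)^2 ≤ (d:ℝ) * ∑ i, s i ^ 2 := by exact_mod_cast this
        _ = (d:ℝ) * ∑ i, P i := by
            rw [Finset.sum_congr rfl (fun i _ => hssq i)]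
    have hPs : 0 ≤ ∑ i, P i := Finset.sum_nonneg fun i _ => hPnn i
    calc |∑ i, ∑ j, ∑ u ∈ S i, ∑ v ∈ S j, w u v * g u * g v|
        ≤ lam / ((d:ℝ)-1) * ((∑ i, s i)^2 - ∑ i, P i) := by rw [← hexp]; exact habs
      _ ≤ lam / ((d:ℝ)-1) * ((d:ℝ) * (∑ i, P i) - ∑ i, P i) := by
          have hc : 0 ≤ lam / ((d:ℝ)-1) := div_nonneg hlam (le_of_lt hd1pos)
          exact mul_le_mul_of_nonneg_left (by linarith) hc
      _ = lam * (∑ i, P i) := by field_simp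
      _ = lam * (1 - Q) := by rw [hPsum]
  -- assemble
  have hEdec : ∑ u, ∑ v, w u v * f u * f v
      = (∑ u, ∑ v, w u v * a (col u) * a (col v))
        + (∑ u, ∑ v, w u v * a (col u) * g v)
        + (∑ u, ∑ v, w u v * g u * a (col v))
        + (∑ u, ∑ v, w u v * g u * g v) := by
    simp only [← Finset.sum_add_distrib]
    refine Finset.sum_congr rfl fun u _ => Finset.sum_congr rfl fun v _ => ?_
    rw [hf u, hf v]; ring
  rw [hEdec, hT1, hT2, hT3, add_zero, add_zero]
  calc |(-Q / ((d:ℝ)-1)) + ∑ u, ∑ v, w u v * g u * g v|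
      ≤ |(-Q / ((d:ℝ)-1))| + |∑ u, ∑ v, w u v * g u * g v| := abs_add_le _ _
    _ ≤ Q / ((d:ℝ)-1) + lam * (1 - Q) := by
        have : |(-Q / ((d:ℝ)-1))| = Q / ((d:ℝ)-1) := by
          rw [abs_div, abs_neg, abs_of_nonneg hQnn, abs_of_pos hd1pos]
        rw [this]
        exact add_le_add_right hT4 _
    _ ≤ 1 / ((d:ℝ)-1) + lam := by
        have h1 : Q / ((d:ℝ)-1) ≤ 1 / ((d:ℝ)-1) := by gcongr
        have h2 : lam * (1 - Q) ≤ lam := by nlinarith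
        linarith
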